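/- Let G be a group acting on ℝ by orientation-preserving homeomorphisms, generated by elements a and b. Suppose x ∈ ℝ is fixed by a, and suppose there exist an element w of G that is a product of nonnegative powers of a and b containing at least one b, and integers N, Q with Q ≥ 1, such that a^N = w^{-Q} in G. Then x is fixed by b, and hence x is a global fixed point of the action. -/

import Mathlib

/-- If `G = ⟨a, b⟩` acts on `ℝ` by orientation-preserving
homeomorphisms, `x` is fixed by `a`, `w` is a product of `a`'s and `b`'s
containing at least one `b`, and `a^N = w^{-Q}` with `Q ≥ 1`, then `x` is
fixed by `b` and hence is a global fixed point. -/
theorem stmt14 {G : Type*} [Group G] (Φ : G →* (ℝ ≃o ℝ)) (a b : G)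
    (hgen : Subgroup.closure ({a, b} : Set G) = ⊤)
    (x : ℝ) (hax : Φ a x = x)
    (w : G) (l : List G) (hl : ∀ c ∈ l, c = a ∨ c = b) (hbl : b ∈ l)
    (hw : w = l.prod)
    (N Q : ℤ) (hQ : 1 ≤ Q) (h : a ^ N = w ^ (-Q)) :
    Φ b x = x ∧ ∀ g : G, Φ g x = x := by
  -- the stabilizer of x is a subgroup
  let S : Subgroup G :=
  { carrier := {g | Φ g x = x}
    one_mem' := by simp
    mul_mem' := by
      intro p q hp hq
      simp only [Set.mem_setOf_eq] at *
      rw [map_mul]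
      show Φ p (Φ q x) = x
      rw [hq, hp]
    inv_mem' := by
      intro p hp
      simp only [Set.mem_setOf_eq] at *
      rw [map_inv]
      show (Φ p).symm x = x
      rw [(Φ p).symm_apply_eq, hp] }
  have haS : a ∈ S := hax
  -- main claim : b fixes x
  have hb : Φ b x = x := by
    rcases lt_trichotomy (Φ b x) x with hlt | heq | hgt
    · -- all letters move x weakly left; b strictly
      exfalso
      have key : ∀ m : List G, (∀ c ∈ m, c = a ∨ c = b) →
          Φ m.prod x ≤ x ∧ (b ∈ m → Φ m.prod x < x) := by
        intro m hm
        induction m with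
        | nil => simp
        | cons c t ih =>
          obtain ⟨ht, ht'⟩ := ih (fun c hc => hm c (List.mem_cons_of_mem _ hc))
          have hc : Φ c x ≤ x := by
            rcases hm c List.mem_cons_self with rfl | rfl
            · exact le_of_eq hax
            · exact le_of_lt hlt
          have hmono := (Φ c).monotone ht
          constructor
          · rw [List.prod_cons, map_mul]
            exact le_trans hmono hc
          · intro hbm
            rw [List.prod_cons, map_mul]
            rcases List.mem_cons.mp hbm with rfl | hbt
            · exact lt_of_le_of_lt hmono hlt
            · exact lt_of_lt_of_le ((Φ c).strictMono (ht' hbt)) hc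
      have hwlt : Φ w x < x := by rw [hw]; exact (key l hl).2 hbl
      -- then w^n x < x for n ≥ 1
      have hpow : ∀ n : ℕ, Φ (w ^ (n + 1)) x < x := by
        intro n
        induction n with
        | zero => simpa using hwlt
        | succ k ih =>
          have : Φ (w ^ (k + 1 + 1)) x = Φ w (Φ (w ^ (k + 1)) x) := by
            rw [pow_succ', map_mul]; rfl
          rw [this]
          exact lt_trans ((Φ w).strictMono ih) hwlt
      have hQpow : Φ (w ^ Q) x < x := by
        obtain ⟨n, rfl⟩ : ∃ n : ℕ, Q = (n : ℤ) + 1 := by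
          refine ⟨(Q - 1).toNat, ?_⟩
          omega
        have : (w : G) ^ ((n : ℤ) + 1) = w ^ (n + 1) := by
          rw [← zpow_natCast]; push_cast; ring_nf
        rw [this]
        exact hpow n
      -- hence w^(-Q) x > x, contradicting a^N x = x
      have haN : Φ (a ^ N) x = x := S.zpow_mem haS N
      rw [h] at haN
      have : Φ (w ^ (-Q)) x = (Φ (w ^ Q)).symm x := by
        rw [zpow_neg, map_inv]; rfl
      rw [this] at haN
      have := (Φ (w ^ Q)).symm_apply_eq.mp haN
      rw [← this] at hQpow
      exact lt_irrefl x hQpow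
    · exact heq
    · -- symmetric case
      exfalso
      have key : ∀ m : List G, (∀ c ∈ m, c = a ∨ c = b) →
          x ≤ Φ m.prod x ∧ (b ∈ m → x < Φ m.prod x) := by
        intro m hm
        induction m with
        | nil => simp
        | cons c t ih =>
          obtain ⟨ht, ht'⟩ := ih (fun c hc => hm c (List.mem_cons_of_mem _ hc))
          have hc : x ≤ Φ c x := by
            rcases hm c List.mem_cons_self with rfl | rfl
            · exact le_of_eq hax.symm
            · exact le_of_lt hgt
          have hmono := (Φ c).monotone ht
          constructor
          · rw [List.prod_cons, map_mul]
            exact le_trans hc hmono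
          · intro hbm
            rw [List.prod_cons, map_mul]
            rcases List.mem_cons.mp hbm with rfl | hbt
            · exact lt_of_lt_of_le hgt hmono
            · exact lt_of_le_of_lt hc ((Φ c).strictMono (ht' hbt))
      have hwgt : x < Φ w x := by rw [hw]; exact (key l hl).2 hbl
      have hpow : ∀ n : ℕ, x < Φ (w ^ (n + 1)) x := by
        intro n
        induction n with
        | zero => simpa using hwgt
        | succ k ih =>
          have : Φ (w ^ (k + 1 + 1)) x = Φ w (Φ (w ^ (k + 1)) x) := by
            rw [pow_succ', map_mul]; rfl
          rw [this]
          exact lt_trans hwgt ((Φ w).strictMono ih)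
      have hQpow : x < Φ (w ^ Q) x := by
        obtain ⟨n, rfl⟩ : ∃ n : ℕ, Q = (n : ℤ) + 1 := by
          refine ⟨(Q - 1).toNat, ?_⟩
          omega
        have : (w : G) ^ ((n : ℤ) + 1) = w ^ (n + 1) := by
          rw [← zpow_natCast]; push_cast; ring_nf
        rw [this]
        exact hpow n
      have haN : Φ (a ^ N) x = x := S.zpow_mem haS N
      rw [h] at haN
      have : Φ (w ^ (-Q)) x = (Φ (w ^ Q)).symm x := by
        rw [zpow_neg, map_inv]; rfl
      rw [this] at haN
      have := (Φ (w ^ Q)).symm_apply_eq.mp haN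
      rw [← this] at hQpow
      exact lt_irrefl x hQpow
  refine ⟨hb, fun g => ?_⟩
  have : g ∈ S := by
    have : Subgroup.closure ({a, b} : Set G) ≤ S := by
      rw [Subgroup.closure_le]
      intro c hc
      rcases hc with rfl | rfl
      · exact haS
      · exact hb
    exact this (hgen ▸ Subgroup.mem_top g)
  exact this
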